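/- Let T be an essentially small monoidal triangulated category whose noncommutative Balmer spectrum Spc(T) is a noetherian topological space. Then the assignment Y ↦ T_Y = {t ∈ T : supp(t) ⊆ Y} is an inclusion-preserving bijection from the collection of all Thomason subsets of Spc(T) to the collection of all thick two-sided semiprime ideals of T, with inverse J ↦ supp(J) = ∪_{t ∈ J} supp(t). -/

import Mathlib

open CategoryTheory CategoryTheory.Limits CategoryTheory.Pretriangulated
  CategoryTheory.MonoidalCategory TopologicalSpace ZeroObject

universe v u

variable (C : Type u) [Category.{v} C] [HasZeroObject C] [Preadditive C]
  [HasShift C ℤ] [∀ n : ℤ, (shiftFunctor C n).Additive] [Pretriangulated C]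
  [HasBinaryBiproducts C] [MonoidalCategory C] [EssentiallySmall.{v} C]
  [∀ X : C, (tensorLeft X).CommShift ℤ] [∀ X : C, (tensorRight X).CommShift ℤ]
  [∀ X : C, (tensorLeft X).IsTriangulated] [∀ X : C, (tensorRight X).IsTriangulated]

/-- A thick two-sided tensor ideal of a monoidal triangulated category:
a thick (triangulated, closed under direct summands) subcategory, closed under
left and right tensoring by arbitrary objects. -/
structure ThickIdeal : Type (max u v) where
  carrier : Set C
  zero_mem : (0 : C) ∈ carrier
  iso_closed : ∀ {a b : C}, (a ≅ b) → a ∈ carrier → b ∈ carrier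
  shift_mem : ∀ (a : C) (n : ℤ), a ∈ carrier → (a⟦n⟧ : C) ∈ carrier
  ext₂ : ∀ T : Triangle C, (T ∈ distTriang C) →
    T.obj₁ ∈ carrier → T.obj₃ ∈ carrier → T.obj₂ ∈ carrier
  summand_mem : ∀ a b : C, (a ⊞ b) ∈ carrier → a ∈ carrier
  tensor_left_mem : ∀ a x : C, a ∈ carrier → (x ⊗ a) ∈ carrier
  tensor_right_mem : ∀ a x : C, a ∈ carrier → (a ⊗ x) ∈ carrier

namespace ThickIdeal

variable {C}

/-- A thick two-sided ideal is proper if it is not all of `C`. -/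
def IsProper (P : ThickIdeal C) : Prop := P.carrier ≠ Set.univ

/-- A prime ideal: a proper thick two-sided ideal `P` such that `I ⊗ J ⊆ P`
implies `I ⊆ P` or `J ⊆ P` for all thick two-sided ideals `I`, `J`.
(Since `P` is a thick two-sided ideal, `I ⊗ J ⊆ P` is equivalent to all
elementwise tensor products lying in `P`.) -/
def IsPrime (P : ThickIdeal C) : Prop :=
  P.IsProper ∧ ∀ I J : ThickIdeal C,
    (∀ i ∈ I.carrier, ∀ j ∈ J.carrier, (i ⊗ j) ∈ P.carrier) →
      I.carrier ⊆ P.carrier ∨ J.carrier ⊆ P.carrier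

/-- A semiprime ideal: an intersection of prime ideals. -/
def IsSemiprime (J : ThickIdeal C) : Prop :=
  ∃ S : Set (ThickIdeal C), (∀ P ∈ S, P.IsPrime) ∧
    J.carrier = ⋂ P ∈ S, P.carrier

end ThickIdeal

/-- The noncommutative Balmer spectrum: the set of prime thick two-sided ideals. -/
def Spc : Type (max u v) := {P : ThickIdeal C // P.IsPrime}

/-- The topology on `Spc C` generated by declaring the sets
`V(S) = {P : P ∩ S = ∅}` to be closed, i.e. their complements
`U(S) = {P : P ∩ S ≠ ∅}` to be open. -/
instance : TopologicalSpace (Spc C) :=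
  generateFrom
    {U : Set (Spc C) | ∃ S : Set C, U = {P : Spc C | (P.1.carrier ∩ S).Nonempty}}

/-- The small noncommutative support of an object. -/
def supp (t : C) : Set (Spc C) := {P : Spc C | t ∉ P.1.carrier}

/-- The support of a collection of objects. -/
def suppSet (E : Set C) : Set (Spc C) := ⋃ t ∈ E, supp C t

/-- A Thomason subset: a union of closed subsets with quasi-compact complements. -/
def IsThomason (Y : Set (Spc C)) : Prop :=
  ∃ 𝒴 : Set (Set (Spc C)), Y = ⋃₀ 𝒴 ∧ ∀ Z ∈ 𝒴, IsClosed Z ∧ IsCompact Zᶜ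

/-- A support datum on `C` with values in the topological space `X`. -/
structure SupportDatum (X : Type*) [TopologicalSpace X] where
  σ : C → Set X
  isClosed_σ : ∀ t : C, IsClosed (σ t)
  σ_zero : σ 0 = ∅
  σ_unit : σ (𝟙_ C) = Set.univ
  σ_sum : ∀ a b : C, σ (a ⊞ b) = σ a ∪ σ b
  σ_shift : ∀ a : C, σ (a⟦(1 : ℤ)⟧) = σ a
  σ_triangle : ∀ T : Triangle C, (T ∈ distTriang C) →
    σ T.obj₁ ⊆ σ T.obj₂ ∪ σ T.obj₃
  σ_tensor : ∀ a b : C, (⋃ c : C, σ (a ⊗ c ⊗ b)) = σ a ∩ σ b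

/-- A specialisation closed subset: a union of closed subsets. -/
def IsSpecClosed {X : Type*} [TopologicalSpace X] (Y : Set X) : Prop :=
  ∃ 𝒴 : Set (Set X), Y = ⋃₀ 𝒴 ∧ ∀ Z ∈ 𝒴, IsClosed Z

/-- A classifying support datum: the space `X` is noetherian and spectral, and
`Θ(Y) = {t : σ(t) ⊆ Y}` is a bijection from specialisation closed subsets of `X`
to thick two-sided semiprime ideals of `C`, with inverse `J ↦ ⋃_{j ∈ J} σ(j)`. -/
structure ClassifyingSupportDatum (X : Type*) [TopologicalSpace X]
    extends SupportDatum C X where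
  noetherian : NoetherianSpace X
  compact : CompactSpace X
  t0 : T0Space X
  basis : IsTopologicalBasis {U : Set X | IsOpen U ∧ IsCompact U}
  qc_inter : ∀ U V : Set X, IsOpen U → IsCompact U → IsOpen V → IsCompact V →
    IsCompact (U ∩ V)
  sober : QuasiSober X
  theta_semiprime : ∀ Y : Set X, IsSpecClosed Y →
    ∃ J : ThickIdeal C, J.IsSemiprime ∧ J.carrier = {t : C | σ t ⊆ Y}
  theta_leftInv : ∀ Y : Set X, IsSpecClosed Y →
    (⋃ t ∈ {t : C | σ t ⊆ Y}, σ t) = Y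
  sigma_specClosed : ∀ J : ThickIdeal C, J.IsSemiprime →
    IsSpecClosed (⋃ j ∈ J.carrier, σ j)
  theta_rightInv : ∀ J : ThickIdeal C, J.IsSemiprime →
    {t : C | σ t ⊆ ⋃ j ∈ J.carrier, σ j} = J.carrier

/-- The alternating tensor product `r 0 ⊗ c 0 ⊗ r 1 ⊗ c 1 ⊗ ⋯ ⊗ c (n-1) ⊗ r n`. -/
def altTensor : ∀ (n : ℕ), (Fin (n + 1) → C) → (Fin n → C) → C
  | 0, r, _ => r 0
  | n + 1, r, c =>
      altTensor n (fun i => r i.castSucc) (fun i => c i.castSucc) ⊗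
        (c (Fin.last n) ⊗ r (Fin.last (n + 1)))


section Aux

variable {C}

set_option linter.unusedSectionVars false

instance (F : C ⥤ C) [F.Additive] : Limits.PreservesBinaryBiproducts F :=
  Limits.preservesBinaryBiproducts_of_preservesBiproducts F

lemma ThickIdeal.mem_iff_of_iso (P : ThickIdeal C) {a b : C} (e : a ≅ b) :
    a ∈ P.carrier ↔ b ∈ P.carrier :=
  ⟨P.iso_closed e, P.iso_closed e.symm⟩

lemma ThickIdeal.biprod_mem (P : ThickIdeal C) {a b : C} (ha : a ∈ P.carrier)
    (hb : b ∈ P.carrier) : (a ⊞ b) ∈ P.carrier :=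
  P.ext₂ _ (binaryBiproductTriangle_distinguished a b) ha hb

lemma ThickIdeal.summand_mem' (P : ThickIdeal C) {a b : C} (h : (a ⊞ b) ∈ P.carrier) :
    b ∈ P.carrier :=
  P.summand_mem b a (P.iso_closed (biprod.braiding a b) h)

lemma ThickIdeal.biprod_mem_iff (P : ThickIdeal C) (a b : C) :
    (a ⊞ b) ∈ P.carrier ↔ a ∈ P.carrier ∧ b ∈ P.carrier :=
  ⟨fun h => ⟨P.summand_mem a b h, P.summand_mem' h⟩, fun ⟨h1, h2⟩ => P.biprod_mem h1 h2⟩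

lemma mem_supp_iff (P : Spc C) (t : C) : P ∈ supp C t ↔ t ∉ P.1.carrier := Iff.rfl

lemma supp_zero : supp C (0 : C) = ∅ := by
  ext P
  simp [supp, P.1.zero_mem]

lemma unit_not_mem (P : Spc C) : 𝟙_ C ∉ P.1.carrier := by
  intro h
  apply P.2.1
  ext x
  simp only [Set.mem_univ, iff_true]
  exact P.1.iso_closed (ρ_ x) (P.1.tensor_left_mem _ x h)

lemma supp_unit : supp C (𝟙_ C) = Set.univ := by
  ext P
  simp [supp, unit_not_mem P]

lemma supp_biprod (a b : C) : supp C (a ⊞ b) = supp C a ∪ supp C b := by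
  ext P
  simp only [supp, Set.mem_setOf_eq, Set.mem_union, P.1.biprod_mem_iff]
  tauto

lemma supp_iso {a b : C} (e : a ≅ b) : supp C a = supp C b := by
  ext P
  simp only [supp, Set.mem_setOf_eq, P.1.mem_iff_of_iso e]

lemma supp_shift_subset (a : C) (n : ℤ) : supp C (a⟦n⟧ : C) ⊆ supp C a :=
  fun P hP h => hP (P.1.shift_mem a n h)

lemma supp_triangle_subset (T : Triangle C) (hT : T ∈ distTriang C) :
    supp C T.obj₂ ⊆ supp C T.obj₁ ∪ supp C T.obj₃ := by
  intro P hP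
  by_contra h
  simp only [Set.mem_union, mem_supp_iff, not_or, not_not] at h
  exact hP (P.1.ext₂ T hT h.1 h.2)

lemma supp_summand_subset (a b : C) : supp C a ⊆ supp C (a ⊞ b) :=
  fun P hP h => hP (P.1.summand_mem a b h)

lemma supp_tensorLeft_subset (a x : C) : supp C (x ⊗ a) ⊆ supp C a :=
  fun P hP h => hP (P.1.tensor_left_mem a x h)

lemma supp_tensorRight_subset (a x : C) : supp C (a ⊗ x) ⊆ supp C a :=
  fun P hP h => hP (P.1.tensor_right_mem a x h)

lemma isOpen_compl_supp (t : C) : IsOpen (supp C t)ᶜ := by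
  have : (supp C t)ᶜ = {P : Spc C | (P.1.carrier ∩ {t}).Nonempty} := by
    ext P
    simp [supp, Set.inter_singleton_nonempty]
  rw [this]
  exact TopologicalSpace.isOpen_generateFrom_of_mem ⟨{t}, rfl⟩

lemma isClosed_supp (t : C) : IsClosed (supp C t) :=
  ⟨isOpen_compl_supp t⟩

/-- The right quotient ideal `{y : ∀ c, a ⊗ (c ⊗ y) ∈ P}`. -/
def rightQuot (P : ThickIdeal C) (a : C) : ThickIdeal C where
  carrier := {y : C | ∀ c : C, a ⊗ (c ⊗ y) ∈ P.carrier}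
  zero_mem := fun c =>
    P.iso_closed ((tensorLeft a).mapIso (tensorLeft c).mapZeroObject ≪≫
      (tensorLeft a).mapZeroObject).symm P.zero_mem
  iso_closed := fun {y y'} e hy c =>
    P.iso_closed ((tensorLeft a).mapIso ((tensorLeft c).mapIso e)) (hy c)
  shift_mem := fun y n hy c =>
    P.iso_closed
      (((tensorLeft a).mapIso (((tensorLeft c).commShiftIso n).app y) ≪≫
        ((tensorLeft a).commShiftIso n).app (c ⊗ y)).symm)
      (P.shift_mem _ n (hy c))
  ext₂ := fun T hT h1 h3 c =>
    P.ext₂ ((tensorLeft c ⋙ tensorLeft a).mapTriangle.obj T)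
      ((tensorLeft c ⋙ tensorLeft a).map_distinguished T hT) (h1 c) (h3 c)
  summand_mem := fun y y' h c =>
    P.summand_mem _ _
      (P.iso_closed ((tensorLeft c ⋙ tensorLeft a).mapBiprod y y') (h c))
  tensor_left_mem := fun y x hy c =>
    P.iso_closed ((tensorLeft a).mapIso (α_ c x y)) (hy (c ⊗ x))
  tensor_right_mem := fun y x hy c =>
    P.iso_closed (α_ a (c ⊗ y) x ≪≫ (tensorLeft a).mapIso (α_ c y x))
      (P.tensor_right_mem _ x (hy c))

/-- The left quotient ideal `{x : ∀ y ∈ J, x ⊗ y ∈ P}`. -/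
def leftQuot (P : ThickIdeal C) (J : ThickIdeal C) : ThickIdeal C where
  carrier := {x : C | ∀ y ∈ J.carrier, x ⊗ y ∈ P.carrier}
  zero_mem := fun y _ =>
    P.iso_closed (tensorRight y).mapZeroObject.symm P.zero_mem
  iso_closed := fun {x x'} e hx y hy =>
    P.iso_closed ((tensorRight y).mapIso e) (hx y hy)
  shift_mem := fun x n hx y hy =>
    P.iso_closed (((tensorRight y).commShiftIso n).app x).symm
      (P.shift_mem _ n (hx y hy))
  ext₂ := fun T hT h1 h3 y hy =>
    P.ext₂ ((tensorRight y).mapTriangle.obj T)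
      ((tensorRight y).map_distinguished T hT) (h1 y hy) (h3 y hy)
  summand_mem := fun x x' h y hy =>
    P.summand_mem _ _ (P.iso_closed ((tensorRight y).mapBiprod x x') (h y hy))
  tensor_left_mem := fun x c hx y hy =>
    P.iso_closed (α_ c x y).symm (P.tensor_left_mem _ c (hx y hy))
  tensor_right_mem := fun x c hx y hy =>
    P.iso_closed (α_ x c y).symm (hx _ (J.tensor_left_mem y c hy))

lemma prime_tensor (P : Spc C) (a b : C) (h : ∀ c : C, a ⊗ (c ⊗ b) ∈ P.1.carrier) :
    a ∈ P.1.carrier ∨ b ∈ P.1.carrier := by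
  have hb : b ∈ (rightQuot P.1 a).carrier := h
  have ha : a ∈ (leftQuot P.1 (rightQuot P.1 a)).carrier := fun y hy =>
    P.1.iso_closed ((tensorLeft a).mapIso (λ_ y)) (hy (𝟙_ C))
  rcases P.2.2 (leftQuot P.1 (rightQuot P.1 a)) (rightQuot P.1 a)
      (fun i hi j hj => hi j hj) with h1 | h2
  · exact Or.inl (h1 ha)
  · exact Or.inr (h2 hb)

lemma exists_tensor_not_mem (P : Spc C) {a b : C} (ha : a ∉ P.1.carrier)
    (hb : b ∉ P.1.carrier) : ∃ c, P ∈ supp C (a ⊗ (c ⊗ b)) := by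
  by_contra h
  push_neg at h
  simp only [mem_supp_iff, not_not] at h
  rcases prime_tensor P a b h with h' | h' <;> [exact ha h'; exact hb h']

lemma supp_tensor3_subset (a c b : C) :
    supp C (a ⊗ (c ⊗ b)) ⊆ supp C a ∩ supp C b :=
  fun P hP => ⟨fun h => hP (P.1.tensor_right_mem a _ h),
    fun h => hP (P.1.tensor_left_mem _ a (P.1.tensor_left_mem b c h))⟩

lemma isOpen_iff_union {U : Set (Spc C)} (hU : IsOpen U) :
    ∃ S : Set C, U = ⋃ t ∈ S, (supp C t)ᶜ := by
  have hU' : TopologicalSpace.GenerateOpen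
      {V : Set (Spc C) | ∃ S : Set C, V = {P : Spc C | (P.1.carrier ∩ S).Nonempty}} U := hU
  clear hU
  induction hU' with
  | basic V hV =>
    obtain ⟨S, rfl⟩ := hV
    refine ⟨S, ?_⟩
    ext P
    simp only [Set.mem_setOf_eq, Set.mem_iUnion, Set.mem_compl_iff, mem_supp_iff, not_not]
    constructor
    · rintro ⟨t, htP, htS⟩
      exact ⟨t, htS, htP⟩
    · rintro ⟨t, htS, htP⟩
      exact ⟨t, htP, htS⟩
  | univ =>
    refine ⟨{(0 : C)}, ?_⟩
    simp [supp_zero]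
  | inter U₁ U₂ _ _ IH₁ IH₂ =>
    obtain ⟨S₁, rfl⟩ := IH₁
    obtain ⟨S₂, rfl⟩ := IH₂
    refine ⟨Set.image2 (· ⊞ ·) S₁ S₂, ?_⟩
    ext P
    simp only [Set.mem_inter_iff, Set.mem_iUnion, Set.mem_compl_iff, mem_supp_iff, not_not,
      Set.mem_image2]
    constructor
    · rintro ⟨⟨s, hs, hsP⟩, ⟨t, ht, htP⟩⟩
      exact ⟨s ⊞ t, ⟨s, hs, t, ht, rfl⟩, P.1.biprod_mem hsP htP⟩
    · rintro ⟨u, ⟨s, hs, t, ht, rfl⟩, hu⟩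
      exact ⟨⟨s, hs, P.1.summand_mem _ _ hu⟩, ⟨t, ht, P.1.summand_mem' hu⟩⟩
  | sUnion 𝒮 _ IH =>
    choose f hf using IH
    refine ⟨⋃ (V : Set (Spc C)) (h : V ∈ 𝒮), f V h, ?_⟩
    ext P
    simp only [Set.mem_sUnion, Set.mem_iUnion, Set.mem_compl_iff]
    constructor
    · rintro ⟨V, hV, hPV⟩
      rw [hf V hV] at hPV
      simp only [Set.mem_iUnion, Set.mem_compl_iff] at hPV
      obtain ⟨t, htf, ht⟩ := hPV
      exact ⟨t, ⟨V, hV, htf⟩, ht⟩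
    · rintro ⟨t, ⟨V, hV, htf⟩, ht⟩
      refine ⟨V, hV, ?_⟩
      rw [hf V hV]
      simp only [Set.mem_iUnion, Set.mem_compl_iff]
      exact ⟨t, htf, ht⟩

lemma exists_finset_of_closed_compact {Z : Set (Spc C)} (hZ : IsClosed Z)
    (hc : IsCompact Zᶜ) : ∃ F : Finset C, Z = ⋂ t ∈ F, supp C t := by
  classical
  obtain ⟨S, hS⟩ := isOpen_iff_union hZ.isOpen_compl
  have cover : Zᶜ ⊆ ⋃ t : S, (supp C t.1)ᶜ := by
    rw [hS]
    intro P hP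
    simp only [Set.mem_iUnion, Set.mem_compl_iff] at hP ⊢
    obtain ⟨t, ht, h⟩ := hP
    exact ⟨⟨t, ht⟩, h⟩
  obtain ⟨F, hF⟩ := hc.elim_finite_subcover (fun t : S => (supp C t.1)ᶜ)
    (fun t => isOpen_compl_supp t.1) cover
  refine ⟨F.image Subtype.val, ?_⟩
  ext P
  simp only [Set.mem_iInter, Finset.mem_image]
  constructor
  · rintro hPZ t ⟨s, _, rfl⟩
    have : (supp C s.1)ᶜ ⊆ Zᶜ := by
      rw [hS]
      intro Q hQ
      simp only [Set.mem_iUnion, Set.mem_compl_iff] at hQ ⊢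
      exact ⟨s.1, s.2, hQ⟩
    by_contra h
    exact this h hPZ
  · intro h
    by_contra hPZ
    have := hF hPZ
    simp only [Set.mem_iUnion, Set.mem_compl_iff] at this
    obtain ⟨s, hsF, hs⟩ := this
    exact hs (h s.1 ⟨s, hsF, rfl⟩)

lemma exists_supp_subset_iInter (F : Finset C) (P : Spc C)
    (hP : ∀ t ∈ F, P ∈ supp C t) :
    ∃ u : C, P ∈ supp C u ∧ supp C u ⊆ ⋂ t ∈ F, supp C t := by
  classical
  induction F using Finset.induction with
  | empty => exact ⟨𝟙_ C, by simp [supp_unit]⟩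
  | @insert a F ha IH =>
    obtain ⟨u, hu1, hu2⟩ := IH (fun t ht => hP t (Finset.mem_insert_of_mem ht))
    have hPa : P ∈ supp C a := hP a (Finset.mem_insert_self a F)
    obtain ⟨c, hc⟩ := exists_tensor_not_mem P hPa hu1
    refine ⟨a ⊗ (c ⊗ u), hc, ?_⟩
    intro Q hQ
    have := supp_tensor3_subset a c u hQ
    simp only [Set.mem_iInter, Finset.mem_insert]
    rintro t (rfl | ht)
    · exact this.1
    · exact Set.mem_iInter₂.mp (hu2 this.2) t ht

/-- The ideal `T_Y` associated to a subset `Y` of the spectrum. -/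
def thetaIdeal (Y : Set (Spc C)) : ThickIdeal C where
  carrier := {t : C | supp C t ⊆ Y}
  zero_mem := by simp [supp_zero]
  iso_closed := fun {a b} e ha => by
    simpa only [Set.mem_setOf_eq, ← supp_iso e] using ha
  shift_mem := fun a n ha => (supp_shift_subset a n).trans ha
  ext₂ := fun T hT h1 h3 =>
    (supp_triangle_subset T hT).trans (Set.union_subset h1 h3)
  summand_mem := fun a b h => (supp_summand_subset a b).trans h
  tensor_left_mem := fun a x ha => (supp_tensorLeft_subset a x).trans ha
  tensor_right_mem := fun a x ha => (supp_tensorRight_subset a x).trans ha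

lemma thetaIdeal_semiprime (Y : Set (Spc C)) : (thetaIdeal Y).IsSemiprime := by
  refine ⟨Subtype.val '' Yᶜ, ?_, ?_⟩
  · rintro Q ⟨P, _, rfl⟩
    exact P.2
  · ext t
    simp only [thetaIdeal, Set.mem_setOf_eq, Set.mem_iInter, Set.mem_image,
      Set.mem_compl_iff]
    constructor
    · rintro h Q ⟨P, hP, rfl⟩
      by_contra ht
      exact hP (h ht)
    · intro h P ht
      by_contra hP
      exact ht (h P.1 ⟨P, hP, rfl⟩)

lemma thickIdeal_ext {I J : ThickIdeal C} (h : I.carrier = J.carrier) : I = J := by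
  cases I
  cases J
  dsimp at h
  subst h
  rfl

lemma suppSet_thetaIdeal_of_thomason {Y : Set (Spc C)} (hY : IsThomason C Y) :
    suppSet C (thetaIdeal Y).carrier = Y := by
  apply Set.Subset.antisymm
  · intro P hP
    simp only [suppSet, Set.mem_iUnion] at hP
    obtain ⟨t, ht, hPt⟩ := hP
    exact ht hPt
  · intro P hP
    obtain ⟨𝒴, rfl, h𝒴⟩ := hY
    obtain ⟨Z, hZ𝒴, hPZ⟩ := hP
    obtain ⟨hZc, hZcc⟩ := h𝒴 Z hZ𝒴
    obtain ⟨F, hF⟩ := exists_finset_of_closed_compact hZc hZcc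
    have hPF : ∀ t ∈ F, P ∈ supp C t := by
      intro t ht
      rw [hF] at hPZ
      exact Set.mem_iInter₂.mp hPZ t ht
    obtain ⟨u, hu1, hu2⟩ := exists_supp_subset_iInter F P hPF
    have hu3 : u ∈ (thetaIdeal (⋃₀ 𝒴)).carrier := by
      refine Set.Subset.trans hu2 ?_
      rw [← hF]
      exact fun Q hQ => ⟨Z, hZ𝒴, hQ⟩
    exact Set.mem_biUnion hu3 hu1

lemma thetaIdeal_suppSet_of_semiprime {J : ThickIdeal C} (hJ : J.IsSemiprime) :
    thetaIdeal (suppSet C J.carrier) = J := by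
  apply thickIdeal_ext
  ext t
  simp only [thetaIdeal, Set.mem_setOf_eq]
  constructor
  · intro h
    obtain ⟨S, hS, hcar⟩ := hJ
    rw [hcar]
    simp only [Set.mem_iInter]
    intro Q hQS
    by_contra ht
    -- build the prime as an element of Spc
    have hQ : (⟨Q, hS Q hQS⟩ : Spc C) ∈ supp C t := ht
    have := h hQ
    replace this : ∃ j, ∃ (_ : j ∈ J.carrier), (⟨Q, hS Q hQS⟩ : Spc C) ∈ supp C j :=
      Set.mem_iUnion₂.mp this
    obtain ⟨j, hj, hQj⟩ := this
    apply hQj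
    rw [hcar] at hj
    exact Set.mem_iInter₂.mp hj Q hQS
  · intro ht
    exact fun P hP => Set.mem_biUnion ht hP

lemma suppSet_thomason (noeth : NoetherianSpace (Spc C)) (E : Set C) :
    IsThomason C (suppSet C E) := by
  refine ⟨(fun t => supp C t) '' E, ?_, ?_⟩
  · ext P
    simp [suppSet, Set.sUnion_image]
  · rintro Z ⟨t, _, rfl⟩
    exact ⟨isClosed_supp t, NoetherianSpace.isCompact _⟩

end Aux

/-- If `Spc C` is noetherian, then `Y ↦ T_Y = {t : supp t ⊆ Y}` is an
inclusion-preserving bijection from Thomason subsets of `Spc C` to thick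
two-sided semiprime ideals of `C`, with inverse `J ↦ supp J`. -/
theorem statement1 (noeth : NoetherianSpace (Spc C)) :
    ∃ e : {Y : Set (Spc C) // IsThomason C Y} ≃ {J : ThickIdeal C // J.IsSemiprime},
      (∀ Y₁ Y₂ : {Y : Set (Spc C) // IsThomason C Y},
        Y₁.1 ⊆ Y₂.1 ↔ (e Y₁).1.carrier ⊆ (e Y₂).1.carrier) ∧
      (∀ Y : {Y : Set (Spc C) // IsThomason C Y},
        (e Y).1.carrier = {t : C | supp C t ⊆ Y.1}) ∧
      (∀ J : {J : ThickIdeal C // J.IsSemiprime},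
        (e.symm J).1 = suppSet C J.1.carrier) := by
  classical
  refine ⟨{ toFun := fun Y => ⟨thetaIdeal Y.1, thetaIdeal_semiprime Y.1⟩
            invFun := fun J => ⟨suppSet C J.1.carrier, suppSet_thomason noeth _⟩
            left_inv := fun Y => Subtype.ext (suppSet_thetaIdeal_of_thomason Y.2)
            right_inv := fun J => Subtype.ext (thetaIdeal_suppSet_of_semiprime J.2) },
    ?_, fun Y => rfl, fun J => rfl⟩
  intro Y₁ Y₂
  constructor
  · intro h t ht
    exact Set.Subset.trans ht h
  · intro h
    rw [← suppSet_thetaIdeal_of_thomason Y₁.2, ← suppSet_thetaIdeal_of_thomason Y₂.2]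
    intro P hP
    simp only [suppSet, Set.mem_iUnion] at hP ⊢
    obtain ⟨t, ht, hPt⟩ := hP
    exact ⟨t, h ht, hPt⟩
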